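/- For the error dynamics ė = −2RR^T e − 2R(L_o ⊗ I_d)p̄ of the orientation-controlled formation system, e(0) = 0 does not imply ė(0) = 0 in general: there exist an infinitesimally rigid framework configuration p with e(p) = 0 and orientation offset p̄ with (L_o ⊗ I_d)p̄ ≠ 0 such that R(p)(L_o ⊗ I_d)p̄ ≠ 0. -/

import Mathlib

open Matrix Kronecker
open scoped Classical

noncomputable section

def tri_ends : Fin 3 → Fin 3 × Fin 3 := ![(0,1),(1,2),(0,2)]

def tri_q : Fin 3 × Fin 2 → ℝ := fun x => !![(0:ℝ),0;1,0;0,1] x.1 x.2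

def tri_dd : Fin 3 → ℝ := ![1, Real.sqrt 2, 1]

def tri_H : Matrix (Fin 3) (Fin 3) ℝ :=
  fun k i => if i = (tri_ends k).2 then 1 else if i = (tri_ends k).1 then -1 else 0

def tri_z : Fin 3 → Fin 2 → ℝ :=
  fun k a => tri_q ((tri_ends k).2, a) - tri_q ((tri_ends k).1, a)

def tri_R : Matrix (Fin 3) (Fin 3 × Fin 2) ℝ := fun k x => tri_z k x.2 * tri_H k x.1

def tri_cols : Fin 3 → Fin 3 × Fin 2 := ![(0,0),(0,1),(1,0)]

def tri_C : Matrix (Fin 3 × Fin 2) (Fin 3) ℝ := fun x j => if x = tri_cols j then 1 else 0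

lemma tri_mul : tri_R * tri_C = !![(-1:ℝ),0,1;0,0,1;0,-1,0] := by
  ext i j
  fin_cases i <;> fin_cases j <;>
    simp [tri_R, tri_C, tri_cols, tri_z, tri_q, tri_H, tri_ends, Matrix.mul_apply,
      Fintype.sum_prod_type, Fin.sum_univ_succ, Matrix.vecHead, Matrix.vecTail]

lemma tri_rank : tri_R.rank = 3 := by
  refine le_antisymm (by simpa using tri_R.rank_le_card_height) ?_
  have h2 : (tri_R * tri_C).rank = 3 := by
    rw [tri_mul]
    have : IsUnit (!![(-1:ℝ),0,1;0,0,1;0,-1,0]) := by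
      rw [Matrix.isUnit_iff_isUnit_det]
      simp [Matrix.det_fin_three]
    simpa using Matrix.rank_of_isUnit _ this
  calc (3:ℕ) = (tri_R * tri_C).rank := h2.symm
    _ ≤ tri_R.rank := Matrix.rank_mul_le_left _ _

/-- For the error dynamics `ė = −2RRᵀe − 2R(L_o ⊗ I_d)p̄`, `e = 0` does not imply
`ė = 0`: there is an infinitesimally rigid 2-D framework configuration `q` with
`e(q) = 0` and an orientation offset with `(L_o ⊗ I_d)p̄ ≠ 0` such that
`R(q)(L_o ⊗ I_d)p̄ ≠ 0`. -/
theorem shape_lost_during_orientation_adjustment :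
    ∃ (n m : ℕ) (ends : Fin m → Fin n × Fin n) (dd : Fin m → ℝ)
      (Eo : Finset (Fin m)) (phat q : Fin n × Fin 2 → ℝ)
      (H Ho : Matrix (Fin m) (Fin n) ℝ) (Lo : Matrix (Fin n) (Fin n) ℝ)
      (z : Fin m → Fin 2 → ℝ) (e : Fin m → ℝ)
      (R : Matrix (Fin m) (Fin n × Fin 2) ℝ) (pbar : Fin n × Fin 2 → ℝ),
      (∀ k, (ends k).1 ≠ (ends k).2) ∧
      H = (fun k i => if i = (ends k).2 then 1 else if i = (ends k).1 then -1 else 0) ∧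
      (∀ k a, z k a = q ((ends k).2, a) - q ((ends k).1, a)) ∧
      (∀ k, e k = (∑ a, (z k a) ^ 2) - (dd k) ^ 2) ∧
      R = (fun k x => z k x.2 * H k x.1) ∧
      Ho = (fun k i => if k ∈ Eo then H k i else 0) ∧
      Lo = Hoᵀ * Ho ∧
      (∀ x, pbar x =
        if ∃ k ∈ Eo, (ends k).1 = x.1 ∨ (ends k).2 = x.1 then q x - phat x else 0) ∧
      -- the framework is infinitesimally rigid and at the correct shape
      R.rank = 2 * n - 3 ∧
      e = 0 ∧
      -- but the orientation control term is active and drives e away from zero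
      (Lo ⊗ₖ (1 : Matrix (Fin 2) (Fin 2) ℝ)).mulVec pbar ≠ 0 ∧
      R.mulVec ((Lo ⊗ₖ (1 : Matrix (Fin 2) (Fin 2) ℝ)).mulVec pbar) ≠ 0 := by
  classical
  refine ⟨3, 3, tri_ends, tri_dd, {0}, 0, tri_q, tri_H,
    (fun k i => if k ∈ ({0} : Finset (Fin 3)) then tri_H k i else 0), _,
    tri_z, fun k => (∑ a, (tri_z k a) ^ 2) - (tri_dd k) ^ 2, tri_R,
    (fun x => if x.1 = 2 then 0 else tri_q x),
    ?_, rfl, fun k a => rfl, fun k => rfl, rfl, rfl, rfl, ?_, ?_, ?_, ?_, ?_⟩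
  · decide
  · rintro ⟨i, a⟩
    fin_cases i <;>
      · simp [tri_ends, tri_q, Matrix.vecHead, Matrix.vecTail, Finset.mem_singleton]
  · simpa using tri_rank
  · funext k
    fin_cases k <;>
      simp [tri_z, tri_q, tri_dd, tri_ends, Fin.sum_univ_succ] <;> norm_num
  · intro h
    have := congrFun h (0, 0)
    simp [Matrix.mulVec, dotProduct, Fintype.sum_prod_type, Fin.sum_univ_succ,
      Matrix.kroneckerMap_apply, Matrix.mul_apply, Matrix.one_apply,
      tri_H, tri_ends, tri_q] at this
    erw [Matrix.mul_apply] at this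
    simp [Matrix.transpose, Fin.sum_univ_succ] at this
  · intro h
    have := congrFun h 0
    simp [Matrix.mulVec, dotProduct, Fintype.sum_prod_type, Fin.sum_univ_succ,
      Matrix.kroneckerMap_apply, Matrix.mul_apply, Matrix.one_apply,
      tri_R, tri_z, tri_H, tri_ends, tri_q] at this
    erw [Matrix.mul_apply, Matrix.mul_apply] at this
    simp [Matrix.transpose, Fin.sum_univ_succ] at this

end
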